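/- arXiv:1204.2282 — 4 statements merged into one kernel-verified Lean document; each statement's English description precedes it below -/
import Mathlib

section
/- For all integers $j \geq 0$, $m \geq 0$ and real $\alpha$, the type I exceptional Laguerre polynomial satisfies the representation $\hat{L}^{I,\alpha}_{m,m+j}(x) = L^{\alpha}_m(-x) L^{\alpha}_j(x) - L^{\alpha}_{m-1}(-x) L^{\alpha}_{j-1}(x)$, where $\hat{L}^{I,\alpha}_{m,m+j}(x) := L^{\alpha}_m(-x) L^{\alpha-1}_j(x) + L^{\alpha-1}_m(-x) L^{\alpha}_{j-1}(x)$. -/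
noncomputable def gbinom (x : ℝ) (k : ℕ) : ℝ :=
  (∏ i ∈ Finset.range k, (x - i)) / (Nat.factorial k)

noncomputable def poch (x : ℝ) (k : ℕ) : ℝ := ∏ i ∈ Finset.range k, (x + i)

/-- Classical (associated) Laguerre polynomial `L^α_n(x)`, with `L^α_n = 0` for `n < 0`. -/
noncomputable def lag (α : ℝ) (n : ℤ) (x : ℝ) : ℝ :=
  if n < 0 then 0 else
    ∑ k ∈ Finset.range (n.toNat + 1),
      (-1 : ℝ) ^ k * gbinom ((n : ℝ) + α) (n.toNat - k) * x ^ k / (Nat.factorial k)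

lemma gbinom_pascal (x : ℝ) (r : ℕ) :
    gbinom x (r+1) = gbinom (x-1) (r+1) + gbinom (x-1) r := by
  unfold gbinom
  have h1 : ∏ i ∈ Finset.range (r+1), (x - i) =
      (∏ i ∈ Finset.range r, (x - 1 - i)) * x := by
    rw [Finset.prod_range_succ']
    congr 1
    · apply Finset.prod_congr rfl
      intro i _
      push_cast
      ring
    · simp
  have h2 : ∏ i ∈ Finset.range (r+1), (x - 1 - i) =
      (∏ i ∈ Finset.range r, (x - 1 - i)) * (x - 1 - r) := by
    rw [Finset.prod_range_succ]
  rw [h1, h2, Nat.factorial_succ]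
  have hr : (Nat.factorial r : ℝ) ≠ 0 := by positivity
  have hr1 : ((r : ℝ) + 1) ≠ 0 := by positivity
  push_cast
  field_simp
  ring

lemma lag_param (α : ℝ) (n : ℕ) (x : ℝ) :
    lag (α-1) n x = lag α n x - lag α ((n:ℤ)-1) x := by
  cases n with
  | zero =>
    simp [lag, gbinom]
  | succ m =>
    have hm : ¬ ((m+1 : ℤ) < 0) := by omega
    have hm' : ¬ (((m:ℤ)+1) - 1 < 0) := by omega
    unfold lag
    push_cast
    rw [if_neg hm, if_neg hm, if_neg hm']
    have ht1 : ((m+1 : ℤ)).toNat = m + 1 := by omega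
    have ht2 : (((m:ℤ)+1) - 1).toNat = m := by omega
    rw [ht1, ht2]
    rw [Finset.sum_range_succ, Finset.sum_range_succ (n := m+1)]
    have hlast : (-1 : ℝ) ^ (m+1) * gbinom ((m:ℝ)+1 + (α-1)) ((m+1) - (m+1)) * x^(m+1) / (Nat.factorial (m+1))
        = (-1 : ℝ) ^ (m+1) * gbinom ((m:ℝ)+1 + α) ((m+1) - (m+1)) * x^(m+1) / (Nat.factorial (m+1)) := by
      simp [gbinom]
    rw [hlast]
    have hsum : ∑ k ∈ Finset.range (m+1),
        (-1 : ℝ) ^ k * gbinom ((m:ℝ)+1 + (α-1)) ((m+1) - k) * x^k / (Nat.factorial k)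
        = (∑ k ∈ Finset.range (m+1),
            (-1 : ℝ) ^ k * gbinom ((m:ℝ)+1 + α) ((m+1) - k) * x^k / (Nat.factorial k))
          - ∑ k ∈ Finset.range (m+1),
            (-1 : ℝ) ^ k * gbinom ((m:ℝ)+1 - 1 + α) (m - k) * x^k / (Nat.factorial k) := by
      rw [← Finset.sum_sub_distrib]
      apply Finset.sum_congr rfl
      intro k hk
      have hk' : k ≤ m := by simpa [Nat.lt_succ_iff] using hk
      have h1 : m + 1 - k = (m - k) + 1 := by omega
      rw [h1, gbinom_pascal ((m:ℝ)+1+α) (m-k)]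
      have : (m:ℝ) + 1 + α - 1 = (m:ℝ) + 1 + (α - 1) := by ring
      rw [this]
      have : (m:ℝ) + 1 - 1 + α = (m:ℝ) + 1 + (α - 1) := by ring
      rw [this]
      ring
    rw [hsum]
    ring

/-- Representation of the type I exceptional Laguerre polynomial in terms of
classical Laguerre polynomials with the same parameter `α`. -/
theorem xLaguerreI_altrep (j m : ℕ) (α x : ℝ) :
    lag α m (-x) * lag (α - 1) j x + lag (α - 1) m (-x) * lag α ((j : ℤ) - 1) x =
      lag α m (-x) * lag α j x - lag α ((m : ℤ) - 1) (-x) * lag α ((j : ℤ) - 1) x := by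
  rw [lag_param α j x, lag_param α m (-x)]
  ring
end

section
/- Let $\alpha > 0$ and let $m \geq 0$, $j \geq 0$ be integers. The type I exceptional Laguerre polynomial $\hat{L}^{I,\alpha}_{m,m+j}$ has at least $j$ distinct zeros in the open interval $(0,\infty)$ and at least $m$ distinct zeros in $(-\infty, 0)$. -/
/-- Type I exceptional `X_m`-Laguerre polynomial of degree `m + j`. -/
noncomputable def XLagI (α : ℝ) (m j : ℤ) (x : ℝ) : ℝ :=
  lag α m (-x) * lag α j x - lag α (m - 1) (-x) * lag α (j - 1) x

-- basic poch lemmas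
lemma poch_zero (x : ℝ) : poch x 0 = 1 := by simp [poch]

lemma poch_succ (x : ℝ) (k : ℕ) : poch x (k+1) = poch x k * (x + k) := by
  simp [poch, Finset.prod_range_succ]

lemma poch_succ' (x : ℝ) (k : ℕ) : poch x (k+1) = x * poch (x+1) k := by
  simp only [poch, Finset.prod_range_succ']
  rw [mul_comm]
  congr 1
  · simp
  · apply Finset.prod_congr rfl; intro i _; push_cast; ring

lemma poch_pos {x : ℝ} (hx : 0 < x) (k : ℕ) : 0 < poch x k := by
  apply Finset.prod_pos
  intro i _
  positivity

-- coefficient of the Laguerre polynomial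
noncomputable def lagC (α : ℝ) (n k : ℕ) : ℝ :=
  (-1)^k * poch (α + k + 1) (n - k) / ((Nat.factorial (n-k)) * (Nat.factorial k))

lemma gbinom_eq (α : ℝ) (n k : ℕ) (h : k ≤ n) :
    gbinom ((n : ℝ) + α) (n - k) = poch (α + k + 1) (n - k) / Nat.factorial (n - k) := by
  unfold gbinom poch
  congr 1
  rw [← Finset.prod_range_reflect]
  apply Finset.prod_congr rfl
  intro i hi
  simp only [Finset.mem_range] at hi
  have h1 : (n - k) - 1 - i + k = n - 1 - i := by omega
  have h2 : i + 1 ≤ n := by omega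
  have hnat : n - k - 1 - i + (k + 1 + i) = n := by omega
  have hc : ((n - k - 1 - i : ℕ) : ℝ) = (n : ℝ) - k - 1 - i := by
    have := congrArg (fun t : ℕ => (t : ℝ)) hnat
    push_cast at this
    linarith
  rw [hc]; ring

noncomputable def Lpoly (α : ℝ) (n : ℕ) : Polynomial ℝ :=
  ∑ k ∈ Finset.range (n+1), Polynomial.C (lagC α n k) * Polynomial.X ^ k

lemma lag_eq_eval (α : ℝ) (n : ℕ) (x : ℝ) : lag α n x = (Lpoly α n).eval x := by
  unfold lag Lpoly
  rw [if_neg (by omega)]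
  simp only [Polynomial.eval_finset_sum, Polynomial.eval_mul, Polynomial.eval_C,
    Polynomial.eval_pow, Polynomial.eval_X, Int.toNat_natCast]
  apply Finset.sum_congr rfl
  intro k hk
  simp only [Finset.mem_range] at hk
  push_cast
  rw [gbinom_eq α n k (by omega)]
  unfold lagC
  field_simp

lemma coeff_Lpoly (α : ℝ) (n k : ℕ) :
    (Lpoly α n).coeff k = if k ≤ n then lagC α n k else 0 := by
  unfold Lpoly
  rw [Polynomial.finset_sum_coeff]
  simp only [Polynomial.coeff_C_mul, Polynomial.coeff_X_pow]
  split_ifs with h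
  · rw [Finset.sum_eq_single k]
    · simp
    · intro b _ hb; simp [Ne.symm hb]
    · intro hk; simp only [Finset.mem_range] at hk; omega
  · apply Finset.sum_eq_zero
    intro b hb
    simp only [Finset.mem_range] at hb
    rw [if_neg (by omega)]
    ring

lemma lagC_self (α : ℝ) (n : ℕ) : lagC α n n = (-1)^n / Nat.factorial n := by
  unfold lagC
  simp [poch_zero]

lemma natDegree_Lpoly (α : ℝ) (n : ℕ) : (Lpoly α n).natDegree = n := by
  have h1 : (Lpoly α n).natDegree ≤ n := by
    rw [Polynomial.natDegree_le_iff_coeff_eq_zero]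
    intro N hN
    rw [coeff_Lpoly, if_neg (by omega)]
  have h2 : n ≤ (Lpoly α n).natDegree := by
    apply Polynomial.le_natDegree_of_ne_zero
    rw [coeff_Lpoly, if_pos le_rfl, lagC_self]
    have h := Nat.factorial_pos n
    apply div_ne_zero
    · exact pow_ne_zero _ (by norm_num)
    · positivity
  omega

lemma leadingCoeff_Lpoly (α : ℝ) (n : ℕ) :
    (Lpoly α n).leadingCoeff = (-1)^n / Nat.factorial n := by
  rw [Polynomial.leadingCoeff, natDegree_Lpoly, coeff_Lpoly, if_pos le_rfl, lagC_self]

lemma Lpoly_ne_zero (α : ℝ) (n : ℕ) : Lpoly α n ≠ 0 := by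
  intro h
  have := leadingCoeff_Lpoly α n
  rw [h] at this
  simp only [Polynomial.leadingCoeff_zero] at this
  have h2 := Nat.factorial_pos n
  have h3 : ((-1 : ℝ))^n ≠ 0 := pow_ne_zero _ (by norm_num)
  exact h3 (by field_simp at this; linarith)

lemma lag_continuous (α : ℝ) (n : ℕ) : Continuous (lag α n) := by
  have : lag α (n : ℤ) = fun x => (Lpoly α n).eval x := by
    funext x; exact lag_eq_eval α n x
  rw [this]
  exact (Lpoly α n).continuous

lemma lag_pos_of_nonpos {α : ℝ} (hα : 0 < α) (n : ℕ) {x : ℝ} (hx : x ≤ 0) :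
    0 < lag α n x := by
  rw [lag_eq_eval]
  unfold Lpoly
  rw [Polynomial.eval_finset_sum]
  apply Finset.sum_pos'
  · intro k hk
    simp only [Finset.mem_range] at hk
    simp only [Polynomial.eval_mul, Polynomial.eval_C, Polynomial.eval_pow, Polynomial.eval_X]
    have h1 : (0:ℝ) < poch (α + k + 1) (n - k) := poch_pos (by positivity) _
    have h2 : ((-1:ℝ))^k * x ^ k = (-x)^k := by rw [← neg_pow]
    have h3 : (0:ℝ) ≤ (-x)^k := pow_nonneg (by linarith) _
    have key : lagC α n k * x ^ k
        = poch (α + k + 1) (n - k) / (((n-k).factorial : ℝ) * (k.factorial : ℝ)) * (-x)^k := by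
      unfold lagC
      rw [← h2]
      ring
    rw [key]
    have hf1 := Nat.factorial_pos (n-k)
    have hf2 := Nat.factorial_pos k
    apply mul_nonneg (le_of_lt (by positivity)) h3
  · refine ⟨0, Finset.mem_range.mpr (by omega), ?_⟩
    simp only [Polynomial.eval_mul, Polynomial.eval_C, Polynomial.eval_pow, Polynomial.eval_X,
      pow_zero, mul_one]
    unfold lagC
    have h1 : (0:ℝ) < poch (α + 0 + 1) (n - 0) := poch_pos (by positivity) _
    simp only [Nat.cast_zero] at h1 ⊢
    have := Nat.factorial_pos (n-0)
    have := Nat.factorial_pos 0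
    positivity

lemma lag_zero_eval (α : ℝ) (n : ℕ) : lag α n 0 = poch (α+1) n / Nat.factorial n := by
  rw [lag_eq_eval]
  rw [← Polynomial.coeff_zero_eq_eval_zero, coeff_Lpoly, if_pos (by omega)]
  unfold lagC
  norm_num

lemma lag_exists_large {α : ℝ} (n : ℕ) (B : ℝ) :
    ∃ X > B, 0 < (-1)^(n+1) * lag α ((n+1 : ℕ) : ℤ) X := by
  set Q : Polynomial ℝ := Polynomial.C ((-1:ℝ)^(n+1)) * Lpoly α (n+1) with hQ
  have hdeg : Q.degree = ((n+1 : ℕ) : WithBot ℕ) := by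
    rw [hQ, Polynomial.degree_C_mul (pow_ne_zero _ (by norm_num)),
      Polynomial.degree_eq_natDegree (Lpoly_ne_zero α (n+1)), natDegree_Lpoly]
  have hlc : 0 ≤ Q.leadingCoeff := by
    rw [hQ, Polynomial.leadingCoeff_mul, Polynomial.leadingCoeff_C, leadingCoeff_Lpoly]
    rw [← mul_div_assoc, ← pow_add]
    have : ((-1:ℝ))^(n+1+(n+1)) = 1 := by
      rw [← two_mul]
      exact Even.neg_one_pow ⟨n+1, by ring⟩
    rw [this]
    have := Nat.factorial_pos (n+1)
    positivity
  have ht := Polynomial.tendsto_atTop_of_leadingCoeff_nonneg Q (by rw [hdeg]; exact_mod_cast Nat.succ_pos n) hlc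
  have h2 : ∀ᶠ x in Filter.atTop, 0 < Q.eval x ∧ B < x := by
    filter_upwards [ht.eventually_gt_atTop 0, Filter.eventually_gt_atTop B] with x h1 h2
    exact ⟨h1, h2⟩
  obtain ⟨X, hX⟩ := h2.exists
  refine ⟨X, hX.2, ?_⟩
  rw [lag_eq_eval]
  have := hX.1
  rw [hQ] at this
  simpa using this

lemma poch_one (x : ℝ) : poch x 1 = x := by simp [poch]

lemma fact_cast_succ (m : ℕ) : ((Nat.factorial (m+1) : ℝ)) = (m+1) * Nat.factorial m := by
  rw [Nat.factorial_succ]; push_cast; ring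

lemma Lpoly_rec (α : ℝ) (n : ℕ) :
    Polynomial.C ((n:ℝ)+2) * Lpoly α (n+2)
      = (Polynomial.C (2*(n:ℝ)+3+α) - Polynomial.X) * Lpoly α (n+1)
        - Polynomial.C ((n:ℝ)+1+α) * Lpoly α n := by
  apply Polynomial.ext
  intro k
  rw [sub_mul, Polynomial.coeff_sub, Polynomial.coeff_sub, Polynomial.coeff_C_mul,
    Polynomial.coeff_C_mul, Polynomial.coeff_C_mul, coeff_Lpoly, coeff_Lpoly, coeff_Lpoly]
  by_cases hk : k ≤ n
  · -- main case
    obtain ⟨d, rfl⟩ : ∃ d, n = k + d := ⟨n - k, by omega⟩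
    rw [if_pos (by omega), if_pos (by omega), if_pos (by omega)]
    have e2 : k + d + 2 - k = d + 2 := by omega
    have e1 : k + d + 1 - k = d + 1 := by omega
    have e0 : k + d - k = d := by omega
    match k with
    | 0 =>
      rw [Polynomial.coeff_X_mul_zero]
      unfold lagC
      simp only [e2, e1, e0, Nat.sub_zero, pow_zero, one_mul, Nat.factorial_zero, Nat.cast_one,
        mul_one, Nat.cast_zero, Nat.cast_add]
      rw [show α + 0 + 1 = α + 1 by ring]
      rw [poch_succ, poch_succ, fact_cast_succ (d+1), fact_cast_succ d]
      have h0 := Nat.factorial_pos d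
      have hd0 : ((Nat.factorial d : ℝ)) ≠ 0 := by positivity
      push_cast
      field_simp
      ring
    | (k'+1) =>
      rw [Polynomial.coeff_X_mul]
      rw [coeff_Lpoly, if_pos (by omega)]
      unfold lagC
      have e3 : k' + 1 + d + 1 - k' = d + 2 := by omega
      simp only [e2, e1, e0, e3]
      rw [show (α + (↑(k'+1):ℝ) + 1) = α + (k':ℝ) + 1 + 1 from by push_cast; ring]
      rw [poch_succ (α + (k':ℝ) + 1 + 1) (d+1), poch_succ (α + (k':ℝ) + 1 + 1) d]
      rw [poch_succ' (α + (k':ℝ) + 1) (d+1), poch_succ (α + (k':ℝ) + 1 + 1) d]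
      rw [fact_cast_succ (d+1), fact_cast_succ d, fact_cast_succ k']
      have h0 := Nat.factorial_pos d
      have h1 := Nat.factorial_pos k'
      have hd0 : ((Nat.factorial d : ℝ)) ≠ 0 := by positivity
      have hk0 : ((Nat.factorial k' : ℝ)) ≠ 0 := by positivity
      push_cast
      field_simp
      ring
  · by_cases hk1 : k = n+1
    · subst hk1
      rw [if_pos (by omega), if_pos (by omega), if_neg (by omega)]
      rw [Polynomial.coeff_X_mul, coeff_Lpoly, if_pos (by omega)]
      unfold lagC
      have e2 : n + 2 - (n+1) = 1 := by omega
      have e1 : n + 1 - (n+1) = 0 := by omega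
      have e3 : n + 1 - n = 1 := by omega
      simp only [e2, e1, e3, poch_one, poch_zero]
      simp only [Nat.factorial_zero, Nat.factorial_one, Nat.cast_one]
      rw [fact_cast_succ n]
      have h1 := Nat.factorial_pos n
      have hn0 : ((Nat.factorial n : ℝ)) ≠ 0 := by positivity
      push_cast
      field_simp
      ring
    · by_cases hk2 : k = n+2
      · subst hk2
        rw [if_pos (by omega), if_neg (by omega), if_neg (by omega)]
        rw [Polynomial.coeff_X_mul, coeff_Lpoly, if_pos (by omega)]
        unfold lagC
        have e2 : n + 2 - (n+2) = 0 := by omega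
        have e4 : n + 2 - 1 = n + 1 := by omega
        have e1 : n + 1 - (n+1) = 0 := by omega
        simp only [e2, e1, e4, poch_zero]
        simp only [Nat.factorial_zero, Nat.cast_one]
        rw [fact_cast_succ (n+1)]
        have h1 := Nat.factorial_pos (n+1)
        have hn0 : ((Nat.factorial (n+1) : ℝ)) ≠ 0 := by positivity
        push_cast
        field_simp
        ring
      · rw [if_neg (by omega), if_neg (by omega), if_neg (by omega)]
        obtain ⟨k', rfl⟩ : ∃ k', k = k'+1 := ⟨k - 1, by omega⟩
        rw [Polynomial.coeff_X_mul, coeff_Lpoly, if_neg (by omega)]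
        ring

lemma Lpoly_zero (α : ℝ) : Lpoly α 0 = Polynomial.C 1 := by
  unfold Lpoly
  rw [Finset.sum_range_one]
  simp [lagC, poch_zero]

lemma Lpoly_one (α : ℝ) :
    Lpoly α 1 = Polynomial.C (α+1) + Polynomial.C (-1) * Polynomial.X := by
  unfold Lpoly
  rw [Finset.sum_range_succ, Finset.sum_range_one]
  have c0 : lagC α 1 0 = α + 1 := by simp [lagC, poch_one]
  have c1 : lagC α 1 1 = -1 := by simp [lagC, poch_zero]
  rw [c0, c1]
  simp

lemma Lpoly_rec0 (α : ℝ) : Lpoly α 1 = (Polynomial.C (1+α) - Polynomial.X) * Lpoly α 0 := by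
  rw [Lpoly_zero, Lpoly_one, show (1+α) = α + 1 from by ring]
  simp [Polynomial.C_neg]
  ring

lemma lag_rec (α : ℝ) (n : ℕ) (x : ℝ) :
    ((n:ℝ)+2) * lag α ((n+2 : ℕ) : ℤ) x
      = (2*(n:ℝ)+3+α-x) * lag α ((n+1 : ℕ) : ℤ) x - ((n:ℝ)+1+α) * lag α (n : ℤ) x := by
  rw [lag_eq_eval, lag_eq_eval, lag_eq_eval]
  have := congrArg (Polynomial.eval x) (Lpoly_rec α n)
  simp only [Polynomial.eval_mul, Polynomial.eval_sub, Polynomial.eval_C, Polynomial.eval_X] at this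
  linarith [this]

lemma lag_rec0 (α : ℝ) (x : ℝ) :
    lag α ((1:ℕ) : ℤ) x = (1+α-x) * lag α ((0:ℕ) : ℤ) x := by
  rw [lag_eq_eval, lag_eq_eval]
  have := congrArg (Polynomial.eval x) (Lpoly_rec0 α)
  simp only [Polynomial.eval_mul, Polynomial.eval_sub, Polynomial.eval_C, Polynomial.eval_X] at this
  linarith [this]

lemma Lpoly_factor (α : ℝ) (n : ℕ) (z : Fin n → ℝ) (hinj : Function.Injective z)
    (hz : ∀ i, lag α n (z i) = 0) :
    Lpoly α n = Polynomial.C ((-1:ℝ)^n / (Nat.factorial n : ℝ)) *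
      ∏ i, (Polynomial.X - Polynomial.C (z i)) := by
  set Q : Polynomial ℝ := Polynomial.C ((-1:ℝ)^n / Nat.factorial n) *
    ∏ i, (Polynomial.X - Polynomial.C (z i)) with hQdef
  have hmon : (∏ i, (Polynomial.X - Polynomial.C (z i))).Monic :=
    Polynomial.monic_prod_of_monic _ _ (fun i _ => Polynomial.monic_X_sub_C (z i))
  have hlcne : ((-1:ℝ))^n / Nat.factorial n ≠ 0 := by
    have := Nat.factorial_pos n
    exact div_ne_zero (pow_ne_zero _ (by norm_num)) (by positivity)
  have hdegP : (∏ i, (Polynomial.X - Polynomial.C (z i))).natDegree = n := by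
    rw [Polynomial.natDegree_prod _ _ (fun i _ => Polynomial.X_sub_C_ne_zero (z i))]
    simp [Polynomial.natDegree_X_sub_C]
  have hQne : Q ≠ 0 := by
    rw [hQdef]
    exact mul_ne_zero (by simpa using hlcne) hmon.ne_zero
  have hdegQ : Q.degree = (n : WithBot ℕ) := by
    rw [hQdef, Polynomial.degree_C_mul hlcne, Polynomial.degree_eq_natDegree hmon.ne_zero, hdegP]
  have hlcQ : Q.leadingCoeff = (-1)^n / Nat.factorial n := by
    rw [hQdef, Polynomial.leadingCoeff_mul, Polynomial.leadingCoeff_C, hmon.leadingCoeff, mul_one]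
  rcases Nat.eq_zero_or_pos n with hn | hn
  · subst hn
    rw [Lpoly_zero, hQdef]
    rw [show (∏ i : Fin 0, (Polynomial.X - Polynomial.C (z i))) = 1 from Finset.prod_of_isEmpty _]
    norm_num
  · have hsub : Lpoly α n - Q = 0 := by
      by_cases hpq : Lpoly α n - Q = 0
      · exact hpq
      · apply Polynomial.eq_zero_of_natDegree_lt_card_of_eval_eq_zero _ hinj
        · intro i
          rw [Polynomial.eval_sub]
          have h1 : (Lpoly α n).eval (z i) = 0 := by rw [← lag_eq_eval]; exact hz i
          have h2 : Q.eval (z i) = 0 := by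
            rw [hQdef, Polynomial.eval_mul, Polynomial.eval_prod]
            rw [Finset.prod_eq_zero (Finset.mem_univ i) (by simp)]
            ring
          rw [h1, h2]; ring
        · rw [Fintype.card_fin]
          have hlt : (Lpoly α n - Q).degree < (n : WithBot ℕ) := by
            have := Polynomial.degree_sub_lt
              (by rw [hdegQ, Polynomial.degree_eq_natDegree (Lpoly_ne_zero α n), natDegree_Lpoly])
              (Lpoly_ne_zero α n)
              (by rw [hlcQ, leadingCoeff_Lpoly])
            rw [Polynomial.degree_eq_natDegree (Lpoly_ne_zero α n), natDegree_Lpoly] at this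
            exact this
          exact (Polynomial.natDegree_lt_iff_degree_lt hpq).mpr hlt
    exact sub_eq_zero.mp hsub

lemma lag_sign_gap (α : ℝ) {n : ℕ} (z : Fin n → ℝ) (hmono : StrictMono z)
    (hz : ∀ i, lag α n (z i) = 0) (k : ℕ) (hk : k ≤ n) (x : ℝ)
    (hlt : ∀ i : Fin n, (i:ℕ) < k → z i < x) (hgt : ∀ i : Fin n, k ≤ (i:ℕ) → x < z i) :
    0 < (-1:ℝ)^k * lag α n x := by
  classical
  rw [lag_eq_eval, Lpoly_factor α n z hmono.injective hz]
  rw [Polynomial.eval_mul, Polynomial.eval_C, Polynomial.eval_prod]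
  simp only [Polynomial.eval_sub, Polynomial.eval_X, Polynomial.eval_C]
  rw [← Finset.prod_filter_mul_prod_filter_not Finset.univ (fun i : Fin n => (i:ℕ) < k)]
  set A := Finset.univ.filter (fun i : Fin n => (i:ℕ) < k) with hAdef
  set B := Finset.univ.filter (fun i : Fin n => ¬ (i:ℕ) < k) with hBdef
  have hA : 0 < ∏ i ∈ A, (x - z i) := by
    apply Finset.prod_pos
    intro i hi
    rw [hAdef, Finset.mem_filter] at hi
    have := hlt i hi.2
    linarith
  have hAcard : A.card = k := by
    have h1 : A.map Fin.valEmbedding = Finset.range k := by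
      ext a
      simp only [Finset.mem_map, Finset.mem_filter, Finset.mem_univ, true_and,
        Fin.valEmbedding_apply, Finset.mem_range, hAdef]
      constructor
      · rintro ⟨i, hi, rfl⟩; exact hi
      · intro ha; exact ⟨⟨a, by omega⟩, ha, rfl⟩
    have := congrArg Finset.card h1
    rwa [Finset.card_map, Finset.card_range] at this
  have hBcard : B.card = n - k := by
    have h1 : B.map Fin.valEmbedding = Finset.Ico k n := by
      ext a
      simp only [Finset.mem_map, Finset.mem_filter, Finset.mem_univ, true_and,
        Fin.valEmbedding_apply, Finset.mem_Ico, hBdef]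
      constructor
      · rintro ⟨i, hi, rfl⟩; exact ⟨by omega, i.isLt⟩
      · intro ha; exact ⟨⟨a, ha.2⟩, by simp only [not_lt]; exact ha.1, rfl⟩
    have := congrArg Finset.card h1
    rwa [Finset.card_map, Nat.card_Ico] at this
  have hB : ∏ i ∈ B, (x - z i) = (-1:ℝ)^(n-k) * ∏ i ∈ B, (z i - x) := by
    rw [← hBcard, ← Finset.prod_const (-1:ℝ), ← Finset.prod_mul_distrib]
    apply Finset.prod_congr rfl
    intro i _
    ring
  have hBpos : 0 < ∏ i ∈ B, (z i - x) := by
    apply Finset.prod_pos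
    intro i hi
    rw [hBdef, Finset.mem_filter] at hi
    have := hgt i (by omega)
    linarith
  rw [hB]
  have hfac := Nat.factorial_pos n
  have key : (-1:ℝ)^k * ((-1:ℝ)^n / (Nat.factorial n : ℝ) *
      ((∏ i ∈ A, (x - z i)) * ((-1:ℝ)^(n-k) * ∏ i ∈ B, (z i - x))))
      = ((-1:ℝ)^(k+n+(n-k)) * ((∏ i ∈ A, (x - z i)) * ∏ i ∈ B, (z i - x))) / Nat.factorial n := by
    rw [pow_add, pow_add]
    ring
  rw [key, show k+n+(n-k) = 2*n from by omega,
    show ((-1:ℝ))^(2*n) = 1 from Even.neg_one_pow ⟨n, by ring⟩]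
  positivity

lemma lag_zeros (α : ℝ) (hα : 0 < α) : ∀ n : ℕ, ∃ z : Fin n → ℝ,
    StrictMono z ∧ (∀ i, 0 < z i) ∧ (∀ i, lag α (n : ℤ) (z i) = 0) ∧
    (∀ i : Fin n, 0 < (-1:ℝ)^(i:ℕ) * lag α ((n:ℤ) - 1) (z i)) := by
  intro n
  induction n with
  | zero => exact ⟨Fin.elim0, fun i => i.elim0, fun i => i.elim0, fun i => i.elim0, fun i => i.elim0⟩
  | succ n ih =>
    obtain ⟨z, hmono, hpos, hzero, hsign⟩ := ih
    -- sign of lag (n+1) at the zeros of lag n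
    have hstep : ∀ i₀ : Fin n, 0 < (-1:ℝ)^((i₀:ℕ)+1) * lag α ((n+1 : ℕ) : ℤ) (z i₀) := by
      intro i₀
      obtain ⟨n', rfl⟩ : ∃ n', n = n'+1 := ⟨n - 1, by have := i₀.isLt; omega⟩
      have hrec := lag_rec α n' (z i₀)
      rw [hzero i₀, mul_zero] at hrec
      have hs := hsign i₀
      rw [show ((n'+1 : ℕ) : ℤ) - 1 = ((n' : ℕ) : ℤ) from by push_cast; ring] at hs
      have hv : lag α ((n'+1+1 : ℕ) : ℤ) (z i₀)
          = -(((n':ℝ)+1+α) / ((n':ℝ)+2)) * lag α ((n' : ℕ) : ℤ) (z i₀) := by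
        rw [show (n'+1+1 : ℕ) = n'+2 from rfl]
        push_cast at hrec ⊢
        field_simp
        linarith [hrec]
      rw [hv]
      have h1 : (0:ℝ) < ((n':ℝ)+1+α) / ((n':ℝ)+2) := by positivity
      have h2 := mul_pos h1 hs
      calc (0:ℝ) < ((n':ℝ)+1+α) / ((n':ℝ)+2) * ((-1:ℝ)^(i₀:ℕ) * lag α ((n' : ℕ) : ℤ) (z i₀)) := h2
        _ = (-1:ℝ)^((i₀:ℕ)+1) * (-(((n':ℝ)+1+α) / ((n':ℝ)+2)) * lag α ((n' : ℕ) : ℤ) (z i₀)) := by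
            rw [pow_succ]; ring
    -- a bound above all zeros
    obtain ⟨B₀, hB₀⟩ : ∃ B₀ : ℝ, ∀ i : Fin n, z i ≤ B₀ := by
      obtain ⟨b, hb⟩ := (Finset.univ.image z).exists_le
      exact ⟨b, fun i => hb _ (Finset.mem_image_of_mem z (Finset.mem_univ i))⟩
    obtain ⟨X, hXB, hXsign⟩ := lag_exists_large (α := α) n (max B₀ 0)
    have hXpos : 0 < X := lt_of_le_of_lt (le_max_right _ _) hXB
    have hXz : ∀ i : Fin n, z i < X := fun i =>
      lt_of_le_of_lt (le_trans (hB₀ i) (le_max_left _ _)) hXB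
    have hcont : Continuous (lag α ((n+1 : ℕ) : ℤ)) := lag_continuous α (n+1)
    have hat0 : 0 < lag α ((n+1 : ℕ) : ℤ) 0 := lag_pos_of_nonpos hα (n+1) le_rfl
    -- claim: a zero in each gap
    have claim : ∀ i : Fin (n+1), ∃ w, lag α ((n+1 : ℕ) : ℤ) w = 0 ∧ 0 < w ∧
        (∀ i' : Fin n, (i':ℕ) < (i:ℕ) → z i' < w) ∧
        (∀ i' : Fin n, (i:ℕ) ≤ (i':ℕ) → w < z i') := by
      intro i
      -- left endpoint
      set a : ℝ := if h : (i:ℕ) = 0 then 0 else z ⟨(i:ℕ)-1, by have := i.isLt; omega⟩ with ha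
      set b : ℝ := if h : (i:ℕ) < n then z ⟨(i:ℕ), h⟩ else X with hb
      have hfa : 0 < (-1:ℝ)^(i:ℕ) * lag α ((n+1 : ℕ) : ℤ) a := by
        rw [ha]
        split_ifs with h
        · rw [h]; simpa using hat0
        · have := hstep ⟨(i:ℕ)-1, by omega⟩
          simpa [show (i:ℕ)-1+1 = (i:ℕ) from by omega] using this
      have hfb : 0 < (-1:ℝ)^((i:ℕ)+1) * lag α ((n+1 : ℕ) : ℤ) b := by
        rw [hb]
        split_ifs with h
        · simpa using hstep ⟨(i:ℕ), h⟩
        · have hi : (i:ℕ) = n := by omega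
          rw [hi]
          exact hXsign
      have hab : a < b := by
        rw [ha, hb]
        split_ifs with h1 h2
        · exact hpos _
        · exact hXpos
        · exact hmono (by rw [Fin.lt_def]; show (i:ℕ)-1 < (i:ℕ); omega)
        · exact hXz _
      have ha0 : 0 ≤ a := by
        rw [ha]; split_ifs with h
        · exact le_refl 0
        · exact le_of_lt (hpos _)
      -- IVT
      obtain ⟨w, hw_mem, hw_eq⟩ : ∃ w ∈ Set.Ioo a b, lag α ((n+1 : ℕ) : ℤ) w = 0 := by
        rcases Nat.even_or_odd (i:ℕ) with he | ho
        · have h1 : 0 < lag α ((n+1 : ℕ) : ℤ) a := by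
            rwa [he.neg_one_pow, one_mul] at hfa
          have h2 : lag α ((n+1 : ℕ) : ℤ) b < 0 := by
            have := hfb
            rw [pow_succ, he.neg_one_pow, one_mul] at this
            linarith
          have := intermediate_value_Ioo' (le_of_lt hab) hcont.continuousOn
          obtain ⟨w, hw1, hw2⟩ := this ⟨h2, h1⟩
          exact ⟨w, hw1, hw2⟩
        · have h1 : lag α ((n+1 : ℕ) : ℤ) a < 0 := by
            have := hfa
            rw [ho.neg_one_pow] at this
            linarith
          have h2 : 0 < lag α ((n+1 : ℕ) : ℤ) b := by
            have := hfb
            rw [pow_succ, ho.neg_one_pow] at this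
            linarith
          have := intermediate_value_Ioo (le_of_lt hab) hcont.continuousOn
          obtain ⟨w, hw1, hw2⟩ := this ⟨h1, h2⟩
          exact ⟨w, hw1, hw2⟩
      refine ⟨w, hw_eq, lt_of_le_of_lt ha0 hw_mem.1, ?_, ?_⟩
      · intro i' hi'
        have h1 : z i' ≤ a := by
          rw [ha]
          split_ifs with h
          · omega
          · exact hmono.monotone (by simp [Fin.le_def]; omega)
        exact lt_of_le_of_lt h1 hw_mem.1
      · intro i' hi'
        have h1 : b ≤ z i' := by
          rw [hb]
          split_ifs with h
          · exact hmono.monotone (by simp [Fin.le_def]; omega)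
          · omega
        exact lt_of_lt_of_le hw_mem.2 h1
    choose w hw1 hw2 hw3 hw4 using claim
    refine ⟨w, ?_, hw2, ?_, ?_⟩
    · intro i i' hii'
      have hin : (i:ℕ) < n := by have h1 := i'.isLt; have h2 : (i:ℕ) < (i':ℕ) := hii'; omega
      calc w i < z ⟨(i:ℕ), hin⟩ := hw4 i ⟨(i:ℕ), hin⟩ le_rfl
        _ < w i' := hw3 i' ⟨(i:ℕ), hin⟩ hii'
    · intro i
      exact_mod_cast hw1 i
    · intro i
      have := lag_sign_gap α z hmono (fun i₀ => hzero i₀) (i:ℕ) (by omega) (w i)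
        (fun i' h => hw3 i i' h) (fun i' h => hw4 i i' h)
      rw [show ((n+1 : ℕ) : ℤ) - 1 = ((n : ℕ) : ℤ) from by push_cast; ring]
      exact this

lemma lag_neg (α : ℝ) {n : ℤ} (hn : n < 0) (x : ℝ) : lag α n x = 0 := by
  rw [lag, if_pos hn]

lemma lag_zero_fun (α : ℝ) (x : ℝ) : lag α ((0:ℕ):ℤ) x = 1 := by
  rw [lag_eq_eval, Lpoly_zero]
  simp

lemma lag_continuous' (α : ℝ) (n : ℤ) : Continuous (lag α n) := by
  rcases n with k | k
  · exact lag_continuous α k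
  · have : lag α (Int.negSucc k) = fun _ => (0:ℝ) := by
      funext x
      exact lag_neg α (Int.negSucc_lt_zero k) x
    rw [this]
    exact continuous_const
  
lemma XLagI_continuous (α : ℝ) (m j : ℤ) : Continuous (XLagI α m j) := by
  unfold XLagI
  exact (((lag_continuous' α m).comp continuous_neg).mul (lag_continuous' α j)).sub
    (((lag_continuous' α (m-1)).comp continuous_neg).mul (lag_continuous' α (j-1)))

lemma XLagI_zero_pos (α : ℝ) (hα : 0 < α) (m j : ℕ) (hm : 1 ≤ m) (hj : 1 ≤ j) :
    0 < XLagI α m j 0 := by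
  unfold XLagI
  rw [neg_zero]
  rw [show ((m:ℤ) - 1) = ((m-1 : ℕ) : ℤ) from by omega,
    show ((j:ℤ) - 1) = ((j-1 : ℕ) : ℤ) from by omega]
  rw [show ((m:ℤ)) = ((m : ℕ) : ℤ) from rfl, show ((j:ℤ)) = ((j : ℕ) : ℤ) from rfl]
  rw [lag_zero_eval, lag_zero_eval, lag_zero_eval, lag_zero_eval]
  obtain ⟨m', rfl⟩ : ∃ m', m = m'+1 := ⟨m-1, by omega⟩
  obtain ⟨j', rfl⟩ : ∃ j', j = j'+1 := ⟨j-1, by omega⟩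
  simp only [Nat.add_sub_cancel]
  rw [poch_succ (α+1) m', poch_succ (α+1) j', fact_cast_succ m', fact_cast_succ j']
  have hm'  := Nat.factorial_pos m'
  have hj'  := Nat.factorial_pos j'
  have hpm : 0 < poch (α+1) m' := poch_pos (by linarith) m'
  have hpj : 0 < poch (α+1) j' := poch_pos (by linarith) j'
  have hfm : (0:ℝ) < (Nat.factorial m' : ℝ) := by positivity
  have hfj : (0:ℝ) < (Nat.factorial j' : ℝ) := by positivity
  rw [div_mul_div_comm, div_mul_div_comm, sub_pos, div_lt_div_iff₀ (by positivity) (by positivity)]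
  have key : (m' : ℝ) * j' + m' + j' + 1 < (α + 1 + m') * (α + 1 + j') := by nlinarith
  nlinarith [mul_pos hpm hpj, mul_pos hfm hfj, mul_pos (mul_pos hpm hpj) (mul_pos hfm hfj)]

lemma XLagI_pos_side (α : ℝ) (hα : 0 < α) (m j : ℕ) :
    ∃ S : Finset ℝ, S.card = j ∧ ∀ x ∈ S, 0 < x ∧ XLagI α m j x = 0 := by
  rcases Nat.eq_zero_or_pos j with hj | hj
  · subst hj; exact ⟨∅, rfl, by simp⟩
  obtain ⟨z, hmono, hposz, hzero, hsign⟩ := lag_zeros α hα j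
  rcases Nat.eq_zero_or_pos m with hm | hm
  · subst hm
    have hX : ∀ x : ℝ, XLagI α ((0:ℕ):ℤ) (j:ℤ) x = lag α (j:ℤ) x := by
      intro x
      unfold XLagI
      rw [lag_neg α (show ((0:ℕ):ℤ)-1 < 0 from by norm_num), lag_zero_fun]
      ring
    refine ⟨Finset.image z Finset.univ, ?_, ?_⟩
    · rw [Finset.card_image_of_injective _ hmono.injective, Finset.card_univ, Fintype.card_fin]
    · intro x hx
      obtain ⟨i, _, rfl⟩ := Finset.mem_image.mp hx
      exact ⟨hposz i, by rw [hX]; exact hzero i⟩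
  have hXz : ∀ i : Fin j, 0 < (-1:ℝ)^((i:ℕ)+1) * XLagI α m j (z i) := by
    intro i
    have h1 : XLagI α m j (z i)
        = - (lag α ((m-1:ℕ):ℤ) (-(z i)) * lag α ((j-1:ℕ):ℤ) (z i)) := by
      unfold XLagI
      rw [hzero i, show ((m:ℤ)-1) = ((m-1:ℕ):ℤ) from by omega,
        show ((j:ℤ)-1) = ((j-1:ℕ):ℤ) from by omega]
      ring
    have h2 : 0 < lag α ((m-1:ℕ):ℤ) (-(z i)) :=
      lag_pos_of_nonpos hα (m-1) (by linarith [hposz i])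
    have h3 : 0 < (-1:ℝ)^(i:ℕ) * lag α ((j-1:ℕ):ℤ) (z i) := by
      have := hsign i
      rwa [show ((j:ℤ)-1) = ((j-1:ℕ):ℤ) from by omega] at this
    rw [h1]
    calc (0:ℝ) < lag α ((m-1:ℕ):ℤ) (-(z i)) * ((-1:ℝ)^(i:ℕ) * lag α ((j-1:ℕ):ℤ) (z i)) :=
          mul_pos h2 h3
      _ = (-1:ℝ)^((i:ℕ)+1) * -(lag α ((m-1:ℕ):ℤ) (-(z i)) * lag α ((j-1:ℕ):ℤ) (z i)) := by
          rw [pow_succ]; ring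
  have h0 : 0 < XLagI α m j 0 := XLagI_zero_pos α hα m j hm hj
  have hcont := XLagI_continuous α m j
  have claim : ∀ i : Fin j, ∃ w, XLagI α m j w = 0 ∧ 0 < w ∧ w < z i ∧
      (∀ i' : Fin j, (i':ℕ) < (i:ℕ) → z i' < w) := by
    intro i
    set a : ℝ := if h : (i:ℕ) = 0 then 0 else z ⟨(i:ℕ)-1, by have := i.isLt; omega⟩ with ha
    have hfa : 0 < (-1:ℝ)^(i:ℕ) * XLagI α m j a := by
      rw [ha]; split_ifs with h
      · rw [h]; simpa using h0
      · have := hXz ⟨(i:ℕ)-1, by have := i.isLt; omega⟩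
        simpa [show (i:ℕ)-1+1 = (i:ℕ) from by omega] using this
    have hfb := hXz i
    have hab : a < z i := by
      rw [ha]; split_ifs with h
      · exact hposz i
      · exact hmono (by rw [Fin.lt_def]; show (i:ℕ)-1 < (i:ℕ); omega)
    have ha0 : 0 ≤ a := by
      rw [ha]; split_ifs with h
      · exact le_refl 0
      · exact le_of_lt (hposz _)
    obtain ⟨w, hw_mem, hw_eq⟩ : ∃ w ∈ Set.Ioo a (z i), XLagI α m j w = 0 := by
      rcases Nat.even_or_odd (i:ℕ) with he | ho
      · have h1 : 0 < XLagI α m j a := by rwa [he.neg_one_pow, one_mul] at hfa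
        have h2 : XLagI α m j (z i) < 0 := by
          have := hfb; rw [pow_succ, he.neg_one_pow, one_mul] at this; linarith
        obtain ⟨w, hw1, hw2⟩ := intermediate_value_Ioo' (le_of_lt hab) hcont.continuousOn ⟨h2, h1⟩
        exact ⟨w, hw1, hw2⟩
      · have h1 : XLagI α m j a < 0 := by
          have := hfa; rw [ho.neg_one_pow] at this; linarith
        have h2 : 0 < XLagI α m j (z i) := by
          have := hfb; rw [pow_succ, ho.neg_one_pow] at this; linarith
        obtain ⟨w, hw1, hw2⟩ := intermediate_value_Ioo (le_of_lt hab) hcont.continuousOn ⟨h1, h2⟩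
        exact ⟨w, hw1, hw2⟩
    refine ⟨w, hw_eq, lt_of_le_of_lt ha0 hw_mem.1, hw_mem.2, ?_⟩
    intro i' hi'
    have h1 : z i' ≤ a := by
      rw [ha]; split_ifs with h
      · omega
      · exact hmono.monotone (by rw [Fin.le_def]; show (i':ℕ) ≤ (i:ℕ)-1; omega)
    exact lt_of_le_of_lt h1 hw_mem.1
  choose w hw1 hw2 hw3 hw4 using claim
  have hwmono : StrictMono w := by
    intro i i' hii'
    calc w i < z i := hw3 i
      _ < w i' := hw4 i' i hii'
  refine ⟨Finset.image w Finset.univ, ?_, ?_⟩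
  · rw [Finset.card_image_of_injective _ hwmono.injective, Finset.card_univ, Fintype.card_fin]
  · intro x hx
    obtain ⟨i, _, rfl⟩ := Finset.mem_image.mp hx
    exact ⟨hw2 i, hw1 i⟩

lemma XLagI_neg_side (α : ℝ) (hα : 0 < α) (m j : ℕ) :
    ∃ T : Finset ℝ, T.card = m ∧ ∀ x ∈ T, x < 0 ∧ XLagI α m j x = 0 := by
  rcases Nat.eq_zero_or_pos m with hm | hm
  · subst hm; exact ⟨∅, rfl, by simp⟩
  obtain ⟨z, hmono, hposz, hzero, hsign⟩ := lag_zeros α hα m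
  have hneginj : Function.Injective (fun i : Fin m => -(z i)) := by
    intro i i' h
    simp only [neg_inj] at h
    exact hmono.injective h
  rcases Nat.eq_zero_or_pos j with hj | hj
  · subst hj
    have hX : ∀ x : ℝ, XLagI α (m:ℤ) ((0:ℕ):ℤ) x = lag α (m:ℤ) (-x) := by
      intro x
      unfold XLagI
      rw [lag_neg α (show ((0:ℕ):ℤ)-1 < 0 from by norm_num), lag_zero_fun]
      ring
    refine ⟨Finset.image (fun i : Fin m => -(z i)) Finset.univ, ?_, ?_⟩
    · rw [Finset.card_image_of_injective _ hneginj, Finset.card_univ, Fintype.card_fin]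
    · intro x hx
      obtain ⟨i, _, rfl⟩ := Finset.mem_image.mp hx
      refine ⟨by simpa using (hposz i), ?_⟩
      rw [hX, neg_neg]
      exact hzero i
  have hXz : ∀ i : Fin m, 0 < (-1:ℝ)^((i:ℕ)+1) * XLagI α m j (-(z i)) := by
    intro i
    have h1 : XLagI α m j (-(z i))
        = - (lag α ((j-1:ℕ):ℤ) (-(z i)) * lag α ((m-1:ℕ):ℤ) (z i)) := by
      unfold XLagI
      rw [neg_neg, hzero i, show ((m:ℤ)-1) = ((m-1:ℕ):ℤ) from by omega,
        show ((j:ℤ)-1) = ((j-1:ℕ):ℤ) from by omega]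
      ring
    have h2 : 0 < lag α ((j-1:ℕ):ℤ) (-(z i)) :=
      lag_pos_of_nonpos hα (j-1) (by linarith [hposz i])
    have h3 : 0 < (-1:ℝ)^(i:ℕ) * lag α ((m-1:ℕ):ℤ) (z i) := by
      have := hsign i
      rwa [show ((m:ℤ)-1) = ((m-1:ℕ):ℤ) from by omega] at this
    rw [h1]
    calc (0:ℝ) < lag α ((j-1:ℕ):ℤ) (-(z i)) * ((-1:ℝ)^(i:ℕ) * lag α ((m-1:ℕ):ℤ) (z i)) :=
          mul_pos h2 h3
      _ = (-1:ℝ)^((i:ℕ)+1) * -(lag α ((j-1:ℕ):ℤ) (-(z i)) * lag α ((m-1:ℕ):ℤ) (z i)) := by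
          rw [pow_succ]; ring
  have h0 : 0 < XLagI α m j 0 := XLagI_zero_pos α hα m j hm hj
  have hcont := XLagI_continuous α m j
  have claim : ∀ i : Fin m, ∃ w, XLagI α m j w = 0 ∧ w < 0 ∧ -(z i) < w ∧
      (∀ i' : Fin m, (i':ℕ) < (i:ℕ) → w < -(z i')) := by
    intro i
    set b : ℝ := if h : (i:ℕ) = 0 then 0 else -(z ⟨(i:ℕ)-1, by have := i.isLt; omega⟩) with hb
    have hfb : 0 < (-1:ℝ)^(i:ℕ) * XLagI α m j b := by
      rw [hb]; split_ifs with h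
      · rw [h]; simpa using h0
      · have := hXz ⟨(i:ℕ)-1, by have := i.isLt; omega⟩
        simpa [show (i:ℕ)-1+1 = (i:ℕ) from by omega] using this
    have hfa := hXz i
    have hab : -(z i) < b := by
      rw [hb]; split_ifs with h
      · have := hposz i; linarith
      · have : z ⟨(i:ℕ)-1, by have := i.isLt; omega⟩ < z i :=
          hmono (by rw [Fin.lt_def]; show (i:ℕ)-1 < (i:ℕ); omega)
        linarith
    have hb0 : b ≤ 0 := by
      rw [hb]; split_ifs with h
      · exact le_refl 0
      · have := hposz (⟨(i:ℕ)-1, by have := i.isLt; omega⟩ : Fin m); linarith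
    obtain ⟨w, hw_mem, hw_eq⟩ : ∃ w ∈ Set.Ioo (-(z i)) b, XLagI α m j w = 0 := by
      rcases Nat.even_or_odd (i:ℕ) with he | ho
      · have h1 : XLagI α m j (-(z i)) < 0 := by
          have := hfa; rw [pow_succ, he.neg_one_pow, one_mul] at this; linarith
        have h2 : 0 < XLagI α m j b := by rwa [he.neg_one_pow, one_mul] at hfb
        obtain ⟨w, hw1, hw2⟩ := intermediate_value_Ioo (le_of_lt hab) hcont.continuousOn ⟨h1, h2⟩
        exact ⟨w, hw1, hw2⟩
      · have h1 : 0 < XLagI α m j (-(z i)) := by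
          have := hfa; rw [pow_succ, ho.neg_one_pow] at this; linarith
        have h2 : XLagI α m j b < 0 := by
          have := hfb; rw [ho.neg_one_pow] at this; linarith
        obtain ⟨w, hw1, hw2⟩ := intermediate_value_Ioo' (le_of_lt hab) hcont.continuousOn ⟨h2, h1⟩
        exact ⟨w, hw1, hw2⟩
    refine ⟨w, hw_eq, lt_of_lt_of_le hw_mem.2 hb0, hw_mem.1, ?_⟩
    intro i' hi'
    have h1 : b ≤ -(z i') := by
      rw [hb]; split_ifs with h
      · omega
      · have : z i' ≤ z ⟨(i:ℕ)-1, by have := i.isLt; omega⟩ :=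
          hmono.monotone (by rw [Fin.le_def]; show (i':ℕ) ≤ (i:ℕ)-1; omega)
        linarith
    exact lt_of_lt_of_le hw_mem.2 h1
  choose w hw1 hw2 hw3 hw4 using claim
  have hwanti : StrictAnti w := by
    intro i i' hii'
    calc w i' < -(z i) := hw4 i' i hii'
      _ < w i := hw3 i
  refine ⟨Finset.image w Finset.univ, ?_, ?_⟩
  · rw [Finset.card_image_of_injective _ hwanti.injective, Finset.card_univ, Fintype.card_fin]
  · intro x hx
    obtain ⟨i, _, rfl⟩ := Finset.mem_image.mp hx
    exact ⟨hw2 i, hw1 i⟩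


/-- The type I exceptional Laguerre polynomial has at least `j` distinct zeros in
`(0, ∞)` and at least `m` distinct zeros in `(-∞, 0)`. -/
theorem xLaguerreI_zero_count (α : ℝ) (hα : 0 < α) (m j : ℕ) :
    (∃ S : Finset ℝ, S.card = j ∧ ∀ x ∈ S, 0 < x ∧ XLagI α m j x = 0) ∧
    (∃ T : Finset ℝ, T.card = m ∧ ∀ x ∈ T, x < 0 ∧ XLagI α m j x = 0) :=
  ⟨XLagI_pos_side α hα m j, XLagI_neg_side α hα m j⟩
end

section
/- For all integers $m \geq 0$, $j \geq 0$ and real $\alpha$, the value of the type II exceptional Laguerre polynomial at the origin is $\hat{L}^{II,\alpha}_{m,m+j}(0) = (m+1)\binom{\alpha+j+1}{j}\binom{m-\alpha-1}{m+1}$. In particular, if $\alpha > m-1$ then $\hat{L}^{II,\alpha}_{m,m+j}(0) \neq 0$. -/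
/-- Type II exceptional `X_m`-Laguerre polynomial of degree `m + j`. -/
noncomputable def XLagII (α : ℝ) (m j : ℤ) (x : ℝ) : ℝ :=
  x * lag (-α - 1) m x * lag (α + 2) (j - 1) x
    + ((m : ℝ) - α - 1) * lag (-α - 2) m x * lag (α + 1) j x

lemma lag_at_zero (α : ℝ) (n : ℕ) : lag α n 0 = gbinom (n + α) n := by
  unfold lag
  rw [if_neg (by exact_mod_cast Nat.not_lt_zero n)]
  rw [Finset.sum_eq_single 0]
  · simp
  · intro k _ hk
    simp [zero_pow hk]
  · intro h
    exact absurd (Finset.mem_range.mpr (Nat.succ_pos n)) h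

/-- Value of the type II exceptional Laguerre polynomial at the origin; in particular
it is nonzero when `α > m - 1`. -/
theorem xLaguerreII_at_zero (m j : ℕ) (α : ℝ) :
    XLagII α m j 0 = (m + 1) * gbinom (α + j + 1) j * gbinom ((m : ℝ) - α - 1) (m + 1) ∧
      (α > (m : ℝ) - 1 → XLagII α m j 0 ≠ 0) := by
  have key : XLagII α m j 0
      = (m + 1) * gbinom (α + j + 1) j * gbinom ((m : ℝ) - α - 1) (m + 1) := by
    unfold XLagII
    rw [lag_at_zero, lag_at_zero, lag_at_zero]
    have h1 : (m : ℝ) + (-α - 2) = (m : ℝ) - α - 2 := by ring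
    have h2 : (j : ℝ) + (α + 1) = α + j + 1 := by ring
    rw [h1, h2]
    unfold gbinom
    rw [Finset.prod_range_succ']
    have h3 : ∀ i ∈ Finset.range m,
        ((m : ℝ) - α - 1 - ((i + 1 : ℕ) : ℝ)) = ((m : ℝ) - α - 2 - i) := by
      intro i _; push_cast; ring
    rw [Finset.prod_congr rfl h3]
    have hf : ((Nat.factorial (m + 1) : ℝ)) = (m + 1) * Nat.factorial m := by
      rw [Nat.factorial_succ]; push_cast; ring
    rw [hf]
    have hm : (Nat.factorial m : ℝ) ≠ 0 := by positivity
    have hj : (Nat.factorial j : ℝ) ≠ 0 := by positivity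
    have hm1 : ((m : ℝ) + 1) ≠ 0 := by positivity
    field_simp
    push_cast
    ring
  refine ⟨key, fun hα => ?_⟩
  rw [key]
  have hg1 : gbinom (α + j + 1) j ≠ 0 := by
    unfold gbinom
    have hj : (Nat.factorial j : ℝ) ≠ 0 := by positivity
    refine div_ne_zero (Finset.prod_ne_zero_iff.mpr fun i hi => ?_) hj
    have hi' : (i : ℝ) < j := by exact_mod_cast Finset.mem_range.mp hi
    have hm0 : (0 : ℝ) ≤ m := Nat.cast_nonneg m
    nlinarith
  have hg2 : gbinom ((m : ℝ) - α - 1) (m + 1) ≠ 0 := by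
    unfold gbinom
    have hm : (Nat.factorial (m + 1) : ℝ) ≠ 0 := by positivity
    refine div_ne_zero (Finset.prod_ne_zero_iff.mpr fun i _ => ?_) hm
    have : (0 : ℝ) ≤ i := Nat.cast_nonneg i
    nlinarith
  have hm1 : ((m : ℝ) + 1) ≠ 0 := by positivity
  exact mul_ne_zero (mul_ne_zero hm1 hg1) hg2
end

section
/- Let $m \geq 1$ be odd, $\alpha > m-1$, and $j \geq 0$. Then the type II exceptional Laguerre polynomial $\hat{L}^{II,\alpha}_{m,m+j}$ has at least one zero in $(-\infty, 0)$, because $\mathrm{sgn}\, \hat{L}^{II,\alpha}_{m,m+j}(0) = (-1)^{m+1} = 1$ while its leading coefficient is $\frac{m-1-j-\alpha}{m!\, j!}(-1)^{m+j}$, so $\hat{L}^{II,\alpha}_{m,m+j}(z) \to -\infty$ as $z \to -\infty$. -/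
open Polynomial Finset Filter

noncomputable def lagPoly (α : ℝ) (n : ℕ) : Polynomial ℝ :=
  ∑ k ∈ Finset.range (n + 1),
    Polynomial.C ((-1 : ℝ) ^ k * gbinom ((n : ℝ) + α) (n - k) / (Nat.factorial k)) * Polynomial.X ^ k

lemma gbinom_zero (x : ℝ) : gbinom x 0 = 1 := by simp [gbinom]

lemma lag_eval (α : ℝ) (n : ℕ) (x : ℝ) : lag α (n : ℤ) x = (lagPoly α n).eval x := by
  rw [lag, if_neg (by exact_mod_cast Nat.not_lt_zero n), lagPoly]
  simp only [Polynomial.eval_finset_sum, Polynomial.eval_mul, Polynomial.eval_C,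
    Polynomial.eval_pow, Polynomial.eval_X, Int.toNat_natCast, Int.cast_natCast]
  exact Finset.sum_congr rfl fun k _ => by ring

lemma lagPoly_coeff (α : ℝ) (n i : ℕ) :
    (lagPoly α n).coeff i =
      if i ≤ n then (-1 : ℝ) ^ i * gbinom ((n : ℝ) + α) (n - i) / (Nat.factorial i) else 0 := by
  rw [lagPoly, Polynomial.finset_sum_coeff]
  simp only [Polynomial.coeff_C_mul, Polynomial.coeff_X_pow, mul_ite, mul_one, mul_zero]
  rw [Finset.sum_ite_eq (Finset.range (n + 1)) i]
  simp [Nat.lt_succ_iff]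

lemma lagPoly_natDegree (α : ℝ) (n : ℕ) : (lagPoly α n).natDegree = n := by
  apply le_antisymm
  · rw [Polynomial.natDegree_le_iff_coeff_eq_zero]
    intro N hN
    rw [lagPoly_coeff, if_neg (by omega)]
  · apply Polynomial.le_natDegree_of_ne_zero
    rw [lagPoly_coeff, if_pos le_rfl, Nat.sub_self, gbinom_zero]
    positivity

lemma lagPoly_leadingCoeff (α : ℝ) (n : ℕ) :
    (lagPoly α n).leadingCoeff = (-1 : ℝ) ^ n / (Nat.factorial n) := by
  rw [Polynomial.leadingCoeff, lagPoly_natDegree, lagPoly_coeff, if_pos le_rfl, Nat.sub_self,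
    gbinom_zero, mul_one]

lemma lagPoly_ne_zero (α : ℝ) (n : ℕ) : lagPoly α n ≠ 0 := by
  rw [← Polynomial.leadingCoeff_ne_zero, lagPoly_leadingCoeff]
  positivity

lemma XLagII_poly (α : ℝ) (m j : ℕ) (hc : (m : ℝ) - 1 - j - α ≠ 0)
    (hma : (m : ℝ) - α - 1 ≠ 0) :
    ∃ P : Polynomial ℝ, (∀ x, XLagII α m j x = P.eval x) ∧ P.natDegree = m + j ∧
      P.leadingCoeff =
        (-1 : ℝ) ^ (m + j) * ((m : ℝ) - 1 - j - α) / (Nat.factorial m * Nat.factorial j) := by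
  rcases j with _ | jn
  · -- j = 0
    refine ⟨Polynomial.C ((m : ℝ) - α - 1) * lagPoly (-α - 2) m, ?_, ?_, ?_⟩
    · intro x
      have h1 : lag (α + 2) (((0 : ℕ) : ℤ) - 1) x = 0 := by
        rw [lag, if_pos (by norm_num)]
      have h2 : lag (α + 1) ((0 : ℕ) : ℤ) x = 1 := by
        rw [lag_eval]
        simp [lagPoly, gbinom_zero]
      rw [XLagII, h1, h2, lag_eval, lag_eval]
      simp only [Polynomial.eval_mul, Polynomial.eval_C]
      push_cast
      ring
    · rw [Polynomial.natDegree_C_mul hma, lagPoly_natDegree]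
      omega
    · rw [Polynomial.leadingCoeff_mul, Polynomial.leadingCoeff_C, lagPoly_leadingCoeff]
      push_cast
      field_simp
      ring
  · -- j = jn + 1
    set j := jn + 1 with hj
    refine ⟨Polynomial.X * lagPoly (-α - 1) m * lagPoly (α + 2) jn
        + Polynomial.C ((m : ℝ) - α - 1) * lagPoly (-α - 2) m * lagPoly (α + 1) j, ?_, ?_⟩
    · intro x
      have h1 : ((j : ℕ) : ℤ) - 1 = (jn : ℤ) := by rw [hj]; push_cast; ring
      rw [XLagII, h1, lag_eval, lag_eval, lag_eval, lag_eval]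
      simp only [Polynomial.eval_add, Polynomial.eval_mul, Polynomial.eval_C, Polynomial.eval_X]
      push_cast
      ring
    · have hd1 : (Polynomial.X * lagPoly (-α - 1) m * lagPoly (α + 2) jn).natDegree = m + j := by
        rw [Polynomial.natDegree_mul (mul_ne_zero Polynomial.X_ne_zero (lagPoly_ne_zero _ _))
            (lagPoly_ne_zero _ _),
          Polynomial.natDegree_mul Polynomial.X_ne_zero (lagPoly_ne_zero _ _),
          Polynomial.natDegree_X, lagPoly_natDegree, lagPoly_natDegree]
        omega
      have hd2 : (Polynomial.C ((m : ℝ) - α - 1) * lagPoly (-α - 2) m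
          * lagPoly (α + 1) j).natDegree = m + j := by
        rw [Polynomial.natDegree_mul (mul_ne_zero (Polynomial.C_ne_zero.mpr hma)
            (lagPoly_ne_zero _ _)) (lagPoly_ne_zero _ _),
          Polynomial.natDegree_mul (Polynomial.C_ne_zero.mpr hma) (lagPoly_ne_zero _ _),
          Polynomial.natDegree_C, lagPoly_natDegree, lagPoly_natDegree]
        omega
      have hcoeff : (Polynomial.X * lagPoly (-α - 1) m * lagPoly (α + 2) jn
          + Polynomial.C ((m : ℝ) - α - 1) * lagPoly (-α - 2) m
            * lagPoly (α + 1) j).coeff (m + j) =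
          (-1 : ℝ) ^ (m + j) * ((m : ℝ) - 1 - j - α) / (Nat.factorial m * Nat.factorial j) := by
        have e1 : (Polynomial.X * lagPoly (-α - 1) m * lagPoly (α + 2) jn).coeff (m + j)
            = (Polynomial.X * lagPoly (-α - 1) m * lagPoly (α + 2) jn).leadingCoeff := by
          rw [← hd1, Polynomial.coeff_natDegree]
        have e2 : (Polynomial.C ((m : ℝ) - α - 1) * lagPoly (-α - 2) m
              * lagPoly (α + 1) j).coeff (m + j)
            = (Polynomial.C ((m : ℝ) - α - 1) * lagPoly (-α - 2) m
              * lagPoly (α + 1) j).leadingCoeff := by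
          rw [← hd2, Polynomial.coeff_natDegree]
        rw [Polynomial.coeff_add, e1, e2,
          Polynomial.leadingCoeff_mul, Polynomial.leadingCoeff_mul,
          Polynomial.leadingCoeff_mul, Polynomial.leadingCoeff_mul,
          Polynomial.leadingCoeff_X, Polynomial.leadingCoeff_C,
          lagPoly_leadingCoeff, lagPoly_leadingCoeff, lagPoly_leadingCoeff,
          lagPoly_leadingCoeff]
        have hfm : (Nat.factorial m : ℝ) ≠ 0 := by positivity
        have hfj : (Nat.factorial jn : ℝ) ≠ 0 := by positivity
        rw [hj, Nat.factorial_succ]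
        push_cast
        rw [pow_add, pow_succ]
        field_simp
        ring
      have hcne : (-1 : ℝ) ^ (m + j) * ((m : ℝ) - 1 - j - α)
          / (Nat.factorial m * Nat.factorial j) ≠ 0 := by
        apply div_ne_zero (mul_ne_zero (pow_ne_zero _ (by norm_num)) hc)
        positivity
      have hdeg : (Polynomial.X * lagPoly (-α - 1) m * lagPoly (α + 2) jn
          + Polynomial.C ((m : ℝ) - α - 1) * lagPoly (-α - 2) m
            * lagPoly (α + 1) j).natDegree = m + j := by
        refine le_antisymm ((Polynomial.natDegree_add_le _ _).trans ?_)
          (Polynomial.le_natDegree_of_ne_zero (hcoeff ▸ hcne))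
        rw [hd1, hd2, max_self]
      constructor
      · exact hdeg
      · rw [Polynomial.leadingCoeff, hdeg, hcoeff]

lemma lag_zero (α : ℝ) (n : ℕ) : lag α (n : ℤ) 0 = gbinom ((n : ℝ) + α) n := by
  rw [lag_eval, ← Polynomial.coeff_zero_eq_eval_zero, lagPoly_coeff, if_pos (Nat.zero_le n)]
  simp

/-- For odd `m` and `α > m - 1`, the type II exceptional Laguerre polynomial is
positive at the origin, tends to `-∞` at `-∞`, and hence has a negative zero. -/
theorem xLaguerreII_negative_zero (m : ℕ) (hm : Odd m) (hm1 : 1 ≤ m) (α : ℝ)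
    (hα : α > (m : ℝ) - 1) (j : ℕ) :
    Real.sign (XLagII α m j 0) = 1 ∧
    Filter.Tendsto (fun z => XLagII α m j z) Filter.atBot Filter.atBot ∧
    ∃ x : ℝ, x < 0 ∧ XLagII α m j x = 0 := by
  have hjm : (0 : ℝ) ≤ j := Nat.cast_nonneg j
  have hc : (m : ℝ) - 1 - j - α < 0 := by linarith
  have hma : (m : ℝ) - α - 1 < 0 := by linarith
  -- sign at zero
  have hg1 : gbinom ((m : ℝ) + (-α - 2)) m < 0 := by
    rw [gbinom]
    apply div_neg_of_neg_of_pos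
    · have hprod : ∀ i ∈ Finset.range m, ((m : ℝ) + (-α - 2) - i) = (-1) * (α + 2 + i - m) := by
        intro i _; ring
      rw [Finset.prod_congr rfl hprod, Finset.prod_mul_distrib, Finset.prod_const,
        Finset.card_range, hm.neg_one_pow]
      have hpos : (0 : ℝ) < ∏ i ∈ Finset.range m, (α + 2 + i - m) := by
        apply Finset.prod_pos
        intro i _
        have : (0 : ℝ) ≤ i := Nat.cast_nonneg i
        linarith
      linarith
    · exact_mod_cast Nat.factorial_pos m
  have hg2 : 0 < gbinom ((j : ℝ) + (α + 1)) j := by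
    rw [gbinom]
    apply div_pos
    · apply Finset.prod_pos
      intro i hi
      have : (i : ℝ) < j := by exact_mod_cast Finset.mem_range.mp hi
      have hm0 : (0 : ℝ) ≤ (m : ℝ) - 1 := by
        have : (1 : ℝ) ≤ m := by exact_mod_cast hm1
        linarith
      linarith
    · exact_mod_cast Nat.factorial_pos j
  have hval0 : XLagII α m j 0 = ((m : ℝ) - α - 1) * gbinom ((m : ℝ) + (-α - 2)) m
      * gbinom ((j : ℝ) + (α + 1)) j := by
    rw [XLagII, lag_zero, lag_zero, lag_zero]
    push_cast
    ring
  have hpos0 : 0 < XLagII α m j 0 := by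
    rw [hval0]
    have := mul_pos_of_neg_of_neg hma hg1
    positivity
  refine ⟨Real.sign_of_pos hpos0, ?_⟩
  -- tendsto
  obtain ⟨P, hP, hdeg, hlc⟩ := XLagII_poly α m j (ne_of_lt hc) (ne_of_lt hma)
  have hPne : P ≠ 0 := by
    intro h
    rw [h, Polynomial.natDegree_zero] at hdeg
    omega
  have hbot : Filter.Tendsto (fun z => XLagII α m j z) Filter.atBot Filter.atBot := by
    set Q := P.comp (-Polynomial.X) with hQ
    have hdX : (-Polynomial.X : Polynomial ℝ).natDegree = 1 := by
      rw [Polynomial.natDegree_neg, Polynomial.natDegree_X]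
    have hdQ : Q.natDegree = m + j := by
      rw [hQ, Polynomial.natDegree_comp, hdX, hdeg, mul_one]
    have hlcQ : Q.leadingCoeff = ((m : ℝ) - 1 - j - α) / (Nat.factorial m * Nat.factorial j) := by
      rw [hQ, Polynomial.leadingCoeff_comp (by rw [hdX]; omega), hlc, hdeg]
      have hX : (-Polynomial.X : Polynomial ℝ).leadingCoeff = -1 := by
        rw [Polynomial.leadingCoeff_neg, Polynomial.leadingCoeff_X]
      rw [hX]
      have h11 : ((-1 : ℝ) ^ (m + j)) * ((-1 : ℝ) ^ (m + j)) = 1 := by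
        rw [← mul_pow]; norm_num
      rw [div_mul_eq_mul_div,
        show (-1 : ℝ) ^ (m + j) * ((m : ℝ) - 1 - (j : ℝ) - α) * (-1) ^ (m + j)
          = ((-1 : ℝ) ^ (m + j) * (-1 : ℝ) ^ (m + j)) * ((m : ℝ) - 1 - (j : ℝ) - α) from by ring,
        h11, one_mul]
    have hQdegpos : 0 < Q.degree := by
      rw [← Polynomial.natDegree_pos_iff_degree_pos, hdQ]
      omega
    have hQlcneg : Q.leadingCoeff ≤ 0 := by
      rw [hlcQ]
      apply le_of_lt
      apply div_neg_of_neg_of_pos hc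
      have h1 : (0 : ℝ) < Nat.factorial m := by exact_mod_cast Nat.factorial_pos m
      have h2 : (0 : ℝ) < Nat.factorial j := by exact_mod_cast Nat.factorial_pos j
      positivity
    have htop : Filter.Tendsto (fun x => Q.eval x) Filter.atTop Filter.atBot :=
      Polynomial.tendsto_atBot_of_leadingCoeff_nonpos Q hQdegpos hQlcneg
    have heq : (fun z => XLagII α m j z) = (fun w => Q.eval w) ∘ (fun z : ℝ => -z) := by
      funext z
      rw [hP z]
      simp [hQ, Polynomial.eval_comp]
    rw [heq]
    exact htop.comp tendsto_neg_atBot_atTop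
  refine ⟨hbot, ?_⟩
  -- root
  have hcont : Continuous (fun z => XLagII α m j z) := by
    have : (fun z => XLagII α m j z) = fun z => P.eval z := funext hP
    rw [this]
    exact P.continuous
  obtain ⟨a, ha⟩ := ((hbot.eventually (Filter.eventually_lt_atBot (0 : ℝ))).and
    (Filter.eventually_lt_atBot (0 : ℝ))).exists
  have hsub := intermediate_value_Icc (le_of_lt ha.2) hcont.continuousOn
  have h0mem : (0 : ℝ) ∈ Set.Icc (XLagII α m j a) (XLagII α m j 0) :=
    ⟨le_of_lt ha.1, le_of_lt hpos0⟩
  obtain ⟨x, hx, hfx⟩ := hsub h0mem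
  refine ⟨x, ?_, hfx⟩
  rcases lt_or_eq_of_le hx.2 with h | h
  · exact h
  · exfalso
    rw [h] at hfx
    linarith
end
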